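/- Let (k_j^{(i)}) for 1 ≤ i ≤ m, 1 ≤ j ≤ n be nonzero integers, and suppose that in the field ℚ(g) the identity Σ_{i=1}^m Σ_{j=1}^n 1/(1 − g^{k_j^{(i)}}) = mn/2 holds (as rational functions of g). Then for every nonzero integer k, #{(i,j) : k_j^{(i)} = k} = #{(i,j) : k_j^{(i)} = −k}. -/

import Mathlib

open Finset Polynomial

noncomputable abbrev AA (n : ℕ) : RatFunc ℚ :=
  algebraMap (Polynomial ℚ) (RatFunc ℚ) (1 - Polynomial.X ^ n)

lemma AA_ne_zero {n : ℕ} (hn : n ≠ 0) : AA n ≠ 0 := by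
  simp only [AA, ne_eq, map_eq_zero_iff _ (RatFunc.algebraMap_injective ℚ)]
  intro h
  have := congrArg (fun q => Polynomial.coeff q 0) h
  simp [Polynomial.coeff_X_pow, Ne.symm hn] at this

lemma lemA (S : Finset ℕ) (h0 : 0 ∉ S) (a : ℕ → ℤ) (r : ℚ)
    (heq : ∑ n ∈ S, (a n : RatFunc ℚ) * (AA n)⁻¹ = RatFunc.C r) :
    ∀ n ∈ S, a n = 0 := by
  induction S using Finset.strongInduction generalizing r with
  | _ S ih =>
  intro n hn
  have hSne : S.Nonempty := ⟨n, hn⟩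
  set n₀ := S.max' hSne with hn₀def
  have hn₀S : n₀ ∈ S := S.max'_mem hSne
  have hn₀pos : n₀ ≠ 0 := fun h => h0 (h ▸ hn₀S)
  -- clear denominators
  have hmul : ∑ x ∈ S, (a x : RatFunc ℚ) * ∏ y ∈ S.erase x, AA y
      = RatFunc.C r * ∏ y ∈ S, AA y := by
    have := congrArg (· * ∏ y ∈ S, AA y) heq
    simp only [Finset.sum_mul] at this
    rw [← this]
    apply Finset.sum_congr rfl
    intro x hx
    rw [mul_assoc]
    congr 1
    rw [← Finset.mul_prod_erase S AA hx, ← mul_assoc,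
      inv_mul_cancel₀ (AA_ne_zero (fun h => h0 (h ▸ hx))), one_mul]
  -- to polynomials
  have hpoly : ∑ x ∈ S, ((a x : Polynomial ℚ)) * ∏ y ∈ S.erase x, (1 - Polynomial.X ^ y)
      = Polynomial.C r * ∏ y ∈ S, (1 - Polynomial.X ^ y) := by
    apply IsFractionRing.injective (Polynomial ℚ) (RatFunc ℚ)
    simp only [AA, map_sub, map_one, map_pow, RatFunc.algebraMap_X] at hmul
    simp only [map_sum, map_mul, map_prod, map_sub, map_one, map_pow, map_intCast,
      RatFunc.algebraMap_C, RatFunc.algebraMap_X]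
    exact hmul
  -- evaluate at primitive n₀-th root of unity
  have hprim := Complex.isPrimitiveRoot_exp n₀ hn₀pos
  set ζ : ℂ := Complex.exp (2 * Real.pi * Complex.I / n₀)
  have hz : (1 : ℂ) - ζ ^ n₀ = 0 := by rw [hprim.pow_eq_one]; ring
  have hnz : ∀ x ∈ S, x ≠ n₀ → (1 : ℂ) - ζ ^ x ≠ 0 := by
    intro x hx hxne h
    have hx1 : ζ ^ x = 1 := by linear_combination -h
    have hdvd := hprim.dvd_of_pow_eq_one x hx1
    have hxpos : 0 < x := Nat.pos_of_ne_zero (fun h => h0 (h ▸ hx))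
    have := Nat.le_of_dvd hxpos hdvd
    have := S.le_max' x hx
    omega
  have heval := congrArg (Polynomial.aeval ζ) hpoly
  simp only [map_sum, map_mul, map_prod, map_sub, map_one, map_pow,
    Polynomial.aeval_X, Polynomial.aeval_C, Polynomial.map_intCast,
    map_intCast, Polynomial.aeval_natCast] at heval
  rw [Finset.prod_eq_zero hn₀S hz, mul_zero,
    Finset.sum_eq_single n₀ (fun x hx hxne => by
      rw [Finset.prod_eq_zero (Finset.mem_erase.mpr ⟨(Ne.symm hxne), hn₀S⟩) hz, mul_zero])
    (fun h => absurd hn₀S h)] at heval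
  have hprodne : ∏ y ∈ S.erase n₀, ((1 : ℂ) - ζ ^ y) ≠ 0 := by
    apply Finset.prod_ne_zero_iff.mpr
    intro y hy
    exact hnz y (Finset.mem_of_mem_erase hy) (Finset.ne_of_mem_erase hy)
  have ha0 : a n₀ = 0 := by
    have := mul_eq_zero.mp heval
    rcases this with h | h
    · exact_mod_cast h
    · exact absurd h hprodne
  -- recurse
  by_cases hne : n = n₀
  · exact hne ▸ ha0
  · apply ih (S.erase n₀) (Finset.erase_ssubset hn₀S)
      (fun h => h0 (Finset.mem_of_mem_erase h)) r _ n (Finset.mem_erase.mpr ⟨hne, hn⟩)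
    rw [← heq, ← Finset.add_sum_erase S _ hn₀S, ha0]
    push_cast
    ring

lemma AA_eq (n : ℕ) : AA n = 1 - RatFunc.X ^ n := by
  simp [AA, map_sub, map_one, map_pow, RatFunc.algebraMap_X]

lemma inv_one_sub_inv (u : RatFunc ℚ) (hu : u ≠ 0) (h1 : 1 - u ≠ 0) :
    (1 - u⁻¹)⁻¹ = 1 - (1 - u)⁻¹ := by
  have hu1 : u ≠ 1 := fun h => h1 (by rw [h]; ring)
  have h2 : 1 - u⁻¹ ≠ 0 := by
    intro h
    have : u⁻¹ = 1 := by linear_combination -h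
    exact hu1 (by rw [← inv_inv u, this, inv_one])
  apply inv_eq_of_mul_eq_one_right
  have e1 : 1 - u⁻¹ = (u - 1) * u⁻¹ := by field_simp
  have e2 : 1 - (1 - u)⁻¹ = -u * (1 - u)⁻¹ := by field_simp; ring
  rw [e1, e2]
  have : (u - 1) = -(1 - u) := by ring
  rw [this]
  field_simp [mul_comm]

theorem weights_pair_of_sum_inv (m n : ℕ) (k : Fin m → Fin n → ℤ)
    (hk : ∀ i j, k i j ≠ 0)
    (h : ∑ i, ∑ j, (1 - (RatFunc.X : RatFunc ℚ) ^ k i j)⁻¹ =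
        RatFunc.C ((m * n : ℚ) / 2)) :
    ∀ c : ℤ, c ≠ 0 →
      (Finset.univ.filter fun p : Fin m × Fin n => k p.1 p.2 = c).card =
      (Finset.univ.filter fun p : Fin m × Fin n => k p.1 p.2 = -c).card := by
  set r : ℚ := (m * n : ℚ) / 2
  rw [← Fintype.sum_prod_type'] at h
  set P : Finset (Fin m × Fin n) := Finset.univ.filter fun p => 0 < k p.1 p.2 with hP
  set Q : Finset (Fin m × Fin n) := Finset.univ.filter fun p => ¬ 0 < k p.1 p.2 with hQ
  set nab : Fin m × Fin n → ℕ := fun p => (k p.1 p.2).natAbs with hnab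
  -- rewrite the sum split by sign
  rw [← Finset.sum_filter_add_sum_filter_not Finset.univ (fun p => 0 < k p.1 p.2)] at h
  have hPterm : ∑ p ∈ P, (1 - (RatFunc.X : RatFunc ℚ) ^ k p.1 p.2)⁻¹
      = ∑ p ∈ P, (AA (nab p))⁻¹ := by
    apply Finset.sum_congr rfl
    intro p hp
    have hpos : 0 < k p.1 p.2 := (Finset.mem_filter.mp hp).2
    have : k p.1 p.2 = ((nab p : ℕ) : ℤ) := by
      show k p.1 p.2 = ((k p.1 p.2).natAbs : ℤ); omega
    rw [this, zpow_natCast, AA_eq]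
  have hQterm : ∑ p ∈ Q, (1 - (RatFunc.X : RatFunc ℚ) ^ k p.1 p.2)⁻¹
      = ∑ p ∈ Q, (1 - (AA (nab p))⁻¹) := by
    apply Finset.sum_congr rfl
    intro p hp
    have hneg : k p.1 p.2 < 0 := by
      have := (Finset.mem_filter.mp hp).2
      have := hk p.1 p.2
      omega
    have : k p.1 p.2 = -((nab p : ℕ) : ℤ) := by
      show k p.1 p.2 = -((k p.1 p.2).natAbs : ℤ); omega
    rw [this, zpow_neg, zpow_natCast, AA_eq]
    have hnab0 : nab p ≠ 0 := by
      show (k p.1 p.2).natAbs ≠ 0; omega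
    rw [← AA_eq,
      inv_one_sub_inv _ (pow_ne_zero _ RatFunc.X_ne_zero) (AA_eq _ ▸ AA_ne_zero hnab0),
      AA_eq]
  rw [hPterm, hQterm, Finset.sum_sub_distrib, Finset.sum_const, nsmul_eq_mul, mul_one] at h
  -- regroup by natAbs values
  intro c hc
  suffices H : ∀ c : ℤ, 0 < c →
      (Finset.univ.filter fun p : Fin m × Fin n => k p.1 p.2 = c).card =
      (Finset.univ.filter fun p : Fin m × Fin n => k p.1 p.2 = -c).card by
    rcases lt_or_gt_of_ne hc with hlt | hgt
    · have := (H (-c) (by omega)).symm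
      simpa using this
    · exact H c hgt
  clear hc c
  intro c hc
  set S : Finset ℕ := (Finset.univ.image nab) ∪ {c.toNat} with hS
  have h0 : 0 ∉ S := by
    simp only [hS, Finset.mem_union, Finset.mem_image, Finset.mem_singleton]
    rintro (⟨p, -, hp⟩ | h1)
    · have h2 : (k p.1 p.2).natAbs = 0 := hp
      exact hk p.1 p.2 (by omega)
    · omega
  have hsub : ∀ T : Finset (Fin m × Fin n), T.image nab ⊆ S := by
    intro T x hx
    simp only [Finset.mem_image] at hx
    obtain ⟨p, -, hp⟩ := hx
    exact Finset.mem_union_left _ (Finset.mem_image.mpr ⟨p, Finset.mem_univ p, hp⟩)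
  have hcomp : ∀ T : Finset (Fin m × Fin n),
      ∑ p ∈ T, (AA (nab p))⁻¹
        = ∑ x ∈ S, ((T.filter fun p => nab p = x).card : RatFunc ℚ) * (AA x)⁻¹ := by
    intro T
    rw [Finset.sum_comp (fun x => (AA x)⁻¹) nab]
    rw [Finset.sum_subset (hsub T)]
    · apply Finset.sum_congr rfl
      intro x hx
      rw [nsmul_eq_mul]
    · intro x hx hnx
      have : (T.filter fun p => nab p = x) = ∅ := by
        rw [Finset.filter_eq_empty_iff]
        intro p hp hpx
        exact hnx (Finset.mem_image.mpr ⟨p, hp, hpx⟩)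
      simp [this]
  rw [hcomp P, hcomp Q] at h
  set a : ℕ → ℤ := fun x =>
    ((P.filter fun p => nab p = x).card : ℤ) - ((Q.filter fun p => nab p = x).card : ℤ)
    with ha
  have key : ∀ x ∈ S, a x = 0 := by
    apply lemA S h0 a (r - Q.card)
    have : ∑ x ∈ S, ((a x : ℤ) : RatFunc ℚ) * (AA x)⁻¹
        = ∑ x ∈ S, ((P.filter fun p => nab p = x).card : RatFunc ℚ) * (AA x)⁻¹
          - ∑ x ∈ S, ((Q.filter fun p => nab p = x).card : RatFunc ℚ) * (AA x)⁻¹ := by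
      rw [← Finset.sum_sub_distrib]
      apply Finset.sum_congr rfl
      intro x hx
      push_cast [ha]
      ring
    rw [this, map_sub]
    have hCQ : (RatFunc.C ((Q.card : ℚ))) = ((Q.card : ℕ) : RatFunc ℚ) :=
      map_natCast (RatFunc.C : ℚ →+* RatFunc ℚ) Q.card
    rw [hCQ]
    linear_combination h
  have hkey := key c.toNat (Finset.mem_union_right _ (Finset.mem_singleton_self _))
  have hPc : (Finset.univ.filter fun p : Fin m × Fin n => k p.1 p.2 = c)
      = P.filter fun p => nab p = c.toNat := by
    ext p
    simp only [Finset.mem_filter, Finset.mem_univ, true_and, hP, hnab]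
    omega
  have hQc : (Finset.univ.filter fun p : Fin m × Fin n => k p.1 p.2 = -c)
      = Q.filter fun p => nab p = c.toNat := by
    ext p
    simp only [Finset.mem_filter, Finset.mem_univ, true_and, hQ, hnab]
    omega
  rw [hPc, hQc]
  simp only [ha] at hkey
  omega
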